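/- Let F : ℝⁿ ⇉ ℝⁿ be an upper semicontinuous set-valued map whose values F(x) are nonempty, closed and convex subsets of ℝⁿ. Then for every ε > 0 there exists a locally Lipschitz single-valued function f_ε : ℝⁿ → ℝⁿ such that the graph of f_ε is contained in graph(F) + εB, where B denotes the closed unit ball of ℝⁿ × ℝⁿ; i.e., for every x ∈ ℝⁿ there exist x' ∈ ℝⁿ and y' ∈ F(x') with ‖(x, f_ε(x)) − (x', y')‖ ≤ ε. -/

import Mathlib

open Set
open Manifold

/-- A set-valued map `F : ℝⁿ ⇉ ℝⁿ` is upper semicontinuous: each value is nonempty and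
closed, and for every open set `N` containing `F x₀` there is an open neighborhood `M`
of `x₀` with `F x ⊆ N` for all `x ∈ M`. -/
def IsUSC {n : ℕ} (F : (Fin n → ℝ) → Set (Fin n → ℝ)) : Prop :=
  ∀ x₀ : Fin n → ℝ, (F x₀).Nonempty ∧ IsClosed (F x₀) ∧
    ∀ N : Set (Fin n → ℝ), IsOpen N → F x₀ ⊆ N →
      ∃ M : Set (Fin n → ℝ), IsOpen M ∧ x₀ ∈ M ∧ ∀ x ∈ M, F x ⊆ N

/-- Cellina's approximate selection theorem. -/
theorem cellina_approximate_selection {n : ℕ} (F : (Fin n → ℝ) → Set (Fin n → ℝ))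
    (hF : IsUSC F) (hconv : ∀ x, Convex ℝ (F x)) (ε : ℝ) (hε : 0 < ε) :
    ∃ fε : (Fin n → ℝ) → (Fin n → ℝ), LocallyLipschitz fε ∧
      ∀ x : Fin n → ℝ, ∃ x' y' : Fin n → ℝ, y' ∈ F x' ∧
        ‖((x, fε x) : (Fin n → ℝ) × (Fin n → ℝ)) - (x', y')‖ ≤ ε := by
  classical
  -- choose points y i ∈ F i
  have hy : ∀ i : Fin n → ℝ, (F i).Nonempty := fun i => (hF i).1
  choose y hyF using hy
  -- choose radii δ
  have hδex : ∀ x : Fin n → ℝ, ∃ δ : ℝ, 0 < δ ∧ δ ≤ ε ∧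
      ∀ z ∈ Metric.ball x δ, F z ⊆ Metric.thickening (ε/2) (F x) := by
    intro x
    obtain ⟨M, hMopen, hxM, hM⟩ := (hF x).2.2 (Metric.thickening (ε/2) (F x))
      Metric.isOpen_thickening (Metric.self_subset_thickening (half_pos hε) _)
    obtain ⟨r, hr, hball⟩ := Metric.isOpen_iff.mp hMopen x hxM
    exact ⟨min r ε, lt_min hr hε, min_le_right _ _,
      fun z hz => hM z (hball (Metric.ball_subset_ball (min_le_left _ _) hz))⟩
  choose δ hδpos hδε hδ using hδex
  set U : (Fin n → ℝ) → Set (Fin n → ℝ) := fun i => Metric.ball i (δ i / 4) with hU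
  obtain ⟨ρ, hρ⟩ := SmoothPartitionOfUnity.exists_isSubordinate (𝓘(ℝ, Fin n → ℝ)) isClosed_univ U
    (fun i => Metric.isOpen_ball)
    (fun x _ => mem_iUnion.2 ⟨x, Metric.mem_ball_self (by have := hδpos x; linarith)⟩)
  set f : (Fin n → ℝ) → (Fin n → ℝ) := fun z => ∑ᶠ i, ρ i z • y i with hf
  have hsmooth : ContMDiff (𝓘(ℝ, Fin n → ℝ)) (𝓘(ℝ, Fin n → ℝ)) ((⊤ : ℕ∞) : WithTop ℕ∞) f :=
    ρ.contMDiff_finsum_smul (fun i x _ => contMDiffAt_const)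
  have hcd : ContDiff ℝ 1 f := (contMDiff_iff_contDiff.mp hsmooth).of_le (by exact_mod_cast le_top)
  refine ⟨f, hcd.locallyLipschitz, fun x => ?_⟩
  -- the finite support at x
  set t := ρ.finsupport x with ht
  have hsum : ∑ i ∈ t, ρ i x = 1 := ρ.sum_finsupport x (mem_univ x)
  have htne : t.Nonempty := by
    rcases Finset.eq_empty_or_nonempty t with h | h
    · rw [h, Finset.sum_empty] at hsum; norm_num at hsum
    · exact h
  obtain ⟨j, hjt, hjmax⟩ := t.exists_max_image δ htne
  -- each i ∈ t has x close to i
  have hxU : ∀ i ∈ t, x ∈ U i := by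
    intro i hit
    have : x ∈ Function.support fun z => ρ i z := by
      have := (ρ.mem_finsupport x).mp hit
      simpa [Function.mem_support] using this
    exact hρ i (subset_tsupport _ this)
  -- y i ∈ cthickening (ε/2) (F j) for i ∈ t
  have hyin : ∀ i ∈ t, y i ∈ Metric.thickening (ε/2) (F j) := by
    intro i hit
    have h1 : dist x i < δ i / 4 := Metric.mem_ball.mp (hxU i hit)
    have h2 : dist x j < δ j / 4 := Metric.mem_ball.mp (hxU j hjt)
    have hij : dist i j < δ j := by
      have hle : δ i ≤ δ j := hjmax i hit
      calc dist i j ≤ dist i x + dist x j := dist_triangle _ _ _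
        _ < δ i / 4 + δ j / 4 := by rw [dist_comm i x]; linarith
        _ ≤ δ j := by linarith [hδpos j]
    exact hδ j i (Metric.mem_ball.mpr hij) (hyF i)
  -- f x is a convex combination
  have hfx : f x = ∑ i ∈ t, ρ i x • y i := by
    rw [hf]
    exact (ρ.sum_finsupport_smul_eq_finsum x (fun i _ => y i)).symm
  have hconvT : Convex ℝ (Metric.thickening (ε/2) (F j)) := (hconv j).thickening _
  have hfxin : f x ∈ Metric.thickening (ε/2) (F j) := by
    rw [hfx]
    exact hconvT.sum_mem (fun i _ => ρ.nonneg i x) hsum hyin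
  obtain ⟨y', hy'F, hy'd⟩ := Metric.mem_thickening_iff.mp hfxin
  refine ⟨j, y', hy'F, ?_⟩
  have h2 : dist x j < δ j / 4 := Metric.mem_ball.mp (hxU j hjt)
  have : ((x, f x) : (Fin n → ℝ) × (Fin n → ℝ)) - (j, y') = (x - j, f x - y') := rfl
  rw [this, Prod.norm_def]
  have hxj : ‖x - j‖ ≤ ε := by
    rw [← dist_eq_norm]
    linarith [hδε j, hδpos j]
  have hfy : ‖f x - y'‖ ≤ ε := by
    rw [← dist_eq_norm]
    linarith
  exact max_le hxj hfy
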